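/- Equip ℝ^{2n} with the standard symplectic form ω and the standard Euclidean inner product, and let L_0 be the span of the first n standard basis vectors. For every Lagrangian M transverse to L_0 there exists a unique n-tuple (φ_1, …, φ_n) of real numbers with 0 < φ_1 ≤ φ_2 ≤ … ≤ φ_n < π such that there exists a symplectic basis (e, f) of ℝ^{2n} which is orthonormal as a 2n-tuple of vectors, with Span(e) = L_0, Span(f) = L_0^⊥ (the Euclidean orthogonal complement), and M = Span{cos(φ_i) e_i + sin(φ_i) f_i : 1 ≤ i ≤ n}. -/

import Mathlib

open Matrix

noncomputable section

/-- The symplectic vector space `ℝ^{2n}`, with coordinates indexed by `Fin n ⊕ Fin n`. -/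
abbrev V2 (n : ℕ) : Type := (Fin n ⊕ Fin n) → ℝ

/-- The standard matrix `J = [[0, Id],[−Id, 0]]`. -/
def Jn (n : ℕ) : Matrix (Fin n ⊕ Fin n) (Fin n ⊕ Fin n) ℝ :=
  Matrix.fromBlocks 0 1 (-1) 0

/-- The standard symplectic form `ω(x,y) = ᵀx J y` on `ℝ^{2n}`. -/
def omegaForm (n : ℕ) (x y : V2 n) : ℝ := x ⬝ᵥ (Jn n).mulVec y

/-- A subspace is Lagrangian if it has dimension `n` and `ω` vanishes on it. -/
def IsLagrangian (n : ℕ) (L : Submodule ℝ (V2 n)) : Prop :=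
  Module.finrank ℝ L = n ∧ ∀ x ∈ L, ∀ y ∈ L, omegaForm n x y = 0

/-- Membership in `Sp(2n,ℝ)`: `ᵀg J g = J`. -/
def IsSymplectic (n : ℕ) (g : Matrix (Fin n ⊕ Fin n) (Fin n ⊕ Fin n) ℝ) : Prop :=
  gᵀ * Jn n * g = Jn n

/-- `φ : L → L'` is the map whose graph is `M`, i.e. `M = {e + φ e : e ∈ L}`. -/
def IsGraphMap (n : ℕ) (L M L' : Submodule ℝ (V2 n)) (φ : L →ₗ[ℝ] L') : Prop :=
  ∀ x : V2 n, x ∈ M ↔ ∃ e : L, x = (e : V2 n) + (φ e : V2 n)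

/-- `tmul v g` is the tuple `v·g`, with `(v·g)_j = Σ_i g_{ij} • v_i`. -/
def tmul (n : ℕ) (v : Fin n → V2 n) (g : Matrix (Fin n) (Fin n) ℝ) : Fin n → V2 n :=
  fun j => ∑ i, g i j • v i

/-- A symplectic basis of `ℝ^{2n}`: a pair of `n`-tuples forming a basis, with
`ω(e_i,e_j) = ω(f_i,f_j) = 0` and `ω(e_i,f_j) = δ_{ij}`. -/
def IsSymplecticBasis (n : ℕ) (e f : Fin n → V2 n) : Prop :=
  (∀ i j, omegaForm n (e i) (e j) = 0) ∧ (∀ i j, omegaForm n (f i) (f j) = 0) ∧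
  (∀ i j, omegaForm n (e i) (f j) = if i = j then 1 else 0) ∧
  LinearIndependent ℝ (Sum.elim e f) ∧
  Submodule.span ℝ (Set.range (Sum.elim e f)) = ⊤

/-- The standard Euclidean inner product on `ℝ^{2n}`. -/
def stdInner (n : ℕ) (x y : V2 n) : ℝ := ∑ j, x j * y j

/-- The Lagrangian `L_0` spanned by the first `n` standard basis vectors. -/
def L0 (n : ℕ) : Submodule ℝ (V2 n) :=
  Submodule.span ℝ (Set.range fun i : Fin n => (Pi.single (Sum.inl i) 1 : V2 n))

/-! ### Auxiliary material -/

namespace LagAux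

/-! #### Generic dot-product orthonormal family lemmas -/

lemma sum_smul_dot {ι κ : Type*} [Fintype κ] (s : Finset ι) (g : ι → ℝ) (v : ι → κ → ℝ)
    (w : κ → ℝ) :
    (∑ i ∈ s, g i • v i) ⬝ᵥ w = ∑ i ∈ s, g i * (v i ⬝ᵥ w) := by
  simp only [dotProduct, Finset.sum_apply, Pi.smul_apply, smul_eq_mul, Finset.sum_mul,
    Finset.mul_sum]
  rw [Finset.sum_comm]
  simp [mul_assoc]

lemma dot_linearIndependent {ι κ : Type*} [Fintype ι] [Fintype κ] [DecidableEq ι]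
    (v : ι → κ → ℝ)
    (h : ∀ i j, v i ⬝ᵥ v j = if i = j then 1 else 0) : LinearIndependent ℝ v := by
  rw [linearIndependent_iff']
  intro s g hg i hi
  have h2 := congrArg (fun w => w ⬝ᵥ v i) hg
  simpa [sum_smul_dot, h, Finset.sum_ite_eq, hi] using h2

lemma dot_span_top {ι κ : Type*} [Fintype ι] [Fintype κ] [DecidableEq ι] (v : ι → κ → ℝ)
    (h : ∀ i j, v i ⬝ᵥ v j = if i = j then 1 else 0)
    (hcard : Fintype.card ι = Fintype.card κ) :
    Submodule.span ℝ (Set.range v) = ⊤ :=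
  (dot_linearIndependent v h).span_eq_top_of_card_eq_finrank'
    (by rw [hcard, Module.finrank_fintype_fun_eq_card])

lemma dot_expansion {ι κ : Type*} [Fintype ι] [Fintype κ] [DecidableEq ι] (v : ι → κ → ℝ)
    (h : ∀ i j, v i ⬝ᵥ v j = if i = j then 1 else 0)
    (hcard : Fintype.card ι = Fintype.card κ) (w : κ → ℝ) :
    w = ∑ i, (w ⬝ᵥ v i) • v i := by
  have hw : w ∈ Submodule.span ℝ (Set.range v) := by
    rw [dot_span_top v h hcard]; trivial
  obtain ⟨c, hc⟩ := Submodule.mem_span_range_iff_exists_fun ℝ |>.mp hw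
  have hci : ∀ i, w ⬝ᵥ v i = c i := by
    intro i
    rw [← hc]
    simp [sum_smul_dot, h, Finset.sum_ite_eq, Finset.sum_ite_eq']
  simp only [hci]
  exact hc.symm

lemma span_range_smul {ι : Type*} {V : Type*} [AddCommGroup V] [Module ℝ V]
    (c : ι → ℝ) (w : ι → V) (hc : ∀ i, c i ≠ 0) :
    Submodule.span ℝ (Set.range fun i => c i • w i) = Submodule.span ℝ (Set.range w) := by
  apply le_antisymm
  · rw [Submodule.span_le]
    rintro _ ⟨i, rfl⟩
    exact Submodule.smul_mem _ _ (Submodule.subset_span ⟨i, rfl⟩)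
  · rw [Submodule.span_le]
    rintro _ ⟨i, rfl⟩
    have : w i = (c i)⁻¹ • (c i • w i) := by
      rw [smul_smul, inv_mul_cancel₀ (hc i), one_smul]
    rw [this]
    exact Submodule.smul_mem _ _ (Submodule.subset_span ⟨i, rfl⟩)

/-! #### Monotone tuples are determined by value counts -/

lemma monotone_tuple_eq {n : ℕ} (φ ψ : Fin n → ℝ) (hφ : Monotone φ) (hψ : Monotone ψ)
    (h : ∀ θ : ℝ, (Finset.univ.filter fun i => φ i = θ).card
        = (Finset.univ.filter fun i => ψ i = θ).card) : φ = ψ := by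
  classical
  apply List.ofFn_injective
  refine List.Perm.eq_of_sortedLE (List.sortedLE_ofFn_iff.mpr hφ)
    (List.sortedLE_ofFn_iff.mpr hψ) ?_
  rw [← Multiset.coe_eq_coe]
  refine Multiset.ext.mpr fun θ => ?_
  have huniv : ((Finset.univ : Finset (Fin n)).val) = ↑(List.finRange n) := by
    rw [Fin.univ_def]
  rw [List.ofFn_eq_map, List.ofFn_eq_map, ← Multiset.map_coe, ← Multiset.map_coe,
    ← huniv, Multiset.count_map, Multiset.count_map]
  have h2 : ∀ (χ : Fin n → ℝ), Multiset.card (Multiset.filter (fun a => θ = χ a) Finset.univ.val)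
      = (Finset.univ.filter fun i => χ i = θ).card := by
    intro χ
    have he : Multiset.filter (fun a => θ = χ a) Finset.univ.val
        = Multiset.filter (fun a => χ a = θ) Finset.univ.val :=
      Multiset.filter_congr (fun x _ => by constructor <;> exact Eq.symm)
    rw [he, Finset.card, Finset.filter_val]
  rw [h2, h2, h θ]

/-! #### The angle function -/

/-- The angle in `(0,π)` whose cotangent is `l`. -/
def ang (l : ℝ) : ℝ := Real.arccos (l / Real.sqrt (1 + l ^ 2))

lemma one_add_sq_pos (l : ℝ) : (0 : ℝ) < 1 + l ^ 2 := by positivity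

lemma sqrt_one_add_sq_pos (l : ℝ) : 0 < Real.sqrt (1 + l ^ 2) :=
  Real.sqrt_pos.mpr (one_add_sq_pos l)

lemma ratio_lt_one (l : ℝ) : l / Real.sqrt (1 + l ^ 2) < 1 := by
  rw [div_lt_one (sqrt_one_add_sq_pos l)]
  calc l ≤ |l| := le_abs_self l
  _ = Real.sqrt (l ^ 2) := (Real.sqrt_sq_eq_abs l).symm
  _ < Real.sqrt (1 + l ^ 2) := by
      apply Real.sqrt_lt_sqrt (sq_nonneg l); linarith

lemma neg_one_lt_ratio (l : ℝ) : -1 < l / Real.sqrt (1 + l ^ 2) := by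
  rw [lt_div_iff₀ (sqrt_one_add_sq_pos l), neg_one_mul, neg_lt]
  calc -l ≤ |l| := neg_le_abs l
  _ = Real.sqrt (l ^ 2) := (Real.sqrt_sq_eq_abs l).symm
  _ < Real.sqrt (1 + l ^ 2) := by
      apply Real.sqrt_lt_sqrt (sq_nonneg l); linarith

lemma cos_ang (l : ℝ) : Real.cos (ang l) = l / Real.sqrt (1 + l ^ 2) :=
  Real.cos_arccos (neg_one_lt_ratio l).le (ratio_lt_one l).le

lemma sin_ang (l : ℝ) : Real.sin (ang l) = 1 / Real.sqrt (1 + l ^ 2) := by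
  rw [ang, Real.sin_arccos]
  have h1 : (1 : ℝ) - (l / Real.sqrt (1 + l ^ 2)) ^ 2 = 1 / (1 + l ^ 2) := by
    rw [div_pow, Real.sq_sqrt (one_add_sq_pos l).le]
    field_simp; ring
  rw [h1, one_div, Real.sqrt_inv, one_div]

lemma ang_pos (l : ℝ) : 0 < ang l := Real.arccos_pos.mpr (ratio_lt_one l)

lemma ang_lt_pi (l : ℝ) : ang l < Real.pi := by
  refine lt_of_le_of_ne (Real.arccos_le_pi _) fun h => ?_
  have h2 : Real.cos (ang l) = -1 := by rw [ang] at h ⊢; rw [h, Real.cos_pi]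
  rw [cos_ang] at h2
  linarith [neg_one_lt_ratio l]

lemma sin_ang_pos (l : ℝ) : 0 < Real.sin (ang l) :=
  Real.sin_pos_of_pos_of_lt_pi (ang_pos l) (ang_lt_pi l)

lemma cos_ang_eq (l : ℝ) : Real.cos (ang l) = l * Real.sin (ang l) := by
  rw [cos_ang, sin_ang]; ring

lemma ang_cot {θ : ℝ} (h1 : 0 < θ) (h2 : θ < Real.pi) :
    ang (Real.cos θ / Real.sin θ) = θ := by
  have hs : 0 < Real.sin θ := Real.sin_pos_of_pos_of_lt_pi h1 h2
  have key : Real.cos θ / Real.sin θ /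
      Real.sqrt (1 + (Real.cos θ / Real.sin θ) ^ 2) = Real.cos θ := by
    have h3 : 1 + (Real.cos θ / Real.sin θ) ^ 2 = (1 / Real.sin θ) ^ 2 := by
      field_simp; exact Real.sin_sq_add_cos_sq θ
    rw [h3, Real.sqrt_sq (by positivity)]
    field_simp
  rw [ang, key, Real.arccos_cos h1.le h2.le]

/-! #### Structure of `V2 n` -/

variable {n : ℕ}

/-- Inclusion of the first factor. -/
def emb1L (n : ℕ) : (Fin n → ℝ) →ₗ[ℝ] V2 n where
  toFun v := Sum.elim v 0
  map_add' x y := by funext a; cases a <;> simp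
  map_smul' c x := by funext a; cases a <;> simp

/-- Inclusion of the second factor. -/
def emb2L (n : ℕ) : (Fin n → ℝ) →ₗ[ℝ] V2 n where
  toFun v := Sum.elim 0 v
  map_add' x y := by funext a; cases a <;> simp
  map_smul' c x := by funext a; cases a <;> simp

lemma emb1L_apply (v : Fin n → ℝ) : emb1L n v = Sum.elim v 0 := rfl
lemma emb2L_apply (v : Fin n → ℝ) : emb2L n v = Sum.elim (0 : Fin n → ℝ) v := rfl

def p1 (n : ℕ) : V2 n →ₗ[ℝ] (Fin n → ℝ) := LinearMap.funLeft ℝ ℝ Sum.inl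
def p2 (n : ℕ) : V2 n →ₗ[ℝ] (Fin n → ℝ) := LinearMap.funLeft ℝ ℝ Sum.inr

@[simp] lemma p1_apply (x : V2 n) (i) : p1 n x i = x (Sum.inl i) := rfl
@[simp] lemma p2_apply (x : V2 n) (i) : p2 n x i = x (Sum.inr i) := rfl

lemma omega_eq (x y : V2 n) : omegaForm n x y =
    (∑ i, x (Sum.inl i) * y (Sum.inr i)) - ∑ i, x (Sum.inr i) * y (Sum.inl i) := by
  simp [omegaForm, Jn, Matrix.mulVec, dotProduct, Fintype.sum_sum_type,
    Matrix.fromBlocks, Finset.mul_sum, sub_eq_add_neg, Matrix.one_apply, mul_ite]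

lemma stdInner_eq (x y : V2 n) : stdInner n x y =
    (∑ i, x (Sum.inl i) * y (Sum.inl i)) + ∑ i, x (Sum.inr i) * y (Sum.inr i) := by
  simp [stdInner, Fintype.sum_sum_type]

lemma stdInner_eq_dot (x y : V2 n) : stdInner n x y = x ⬝ᵥ y := rfl

lemma omega_elim (v w v' w' : Fin n → ℝ) :
    omegaForm n (Sum.elim v w) (Sum.elim v' w') = v ⬝ᵥ w' - w ⬝ᵥ v' := by
  rw [omega_eq]; simp [dotProduct]

lemma stdInner_elim (v w v' w' : Fin n → ℝ) :
    stdInner n (Sum.elim v w) (Sum.elim v' w') = v ⬝ᵥ v' + w ⬝ᵥ w' := by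
  rw [stdInner_eq]; simp [dotProduct]

lemma smul_elim (c : ℝ) (v w : Fin n → ℝ) :
    c • (Sum.elim v w : V2 n) = Sum.elim (c • v) (c • w) := by
  funext a; cases a <;> simp

lemma add_elim (v w v' w' : Fin n → ℝ) :
    (Sum.elim v w : V2 n) + Sum.elim v' w' = Sum.elim (v + v') (w + w') := by
  funext a; cases a <;> simp

lemma emb1L_single (i : Fin n) :
    emb1L n (Pi.single i 1) = (Pi.single (Sum.inl i) 1 : V2 n) := by
  funext a
  cases a with
  | inl j => by_cases h : j = i <;> simp [emb1L_apply, Pi.single_apply, h]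
  | inr j => simp [emb1L_apply, Pi.single_apply]

lemma L0_eq_range : L0 n = LinearMap.range (emb1L n) := by
  have h : (fun i : Fin n => (Pi.single (Sum.inl i) 1 : V2 n))
      = (emb1L n) ∘ (fun i : Fin n => (Pi.single i 1 : Fin n → ℝ)) := by
    funext i; exact (emb1L_single i).symm
  rw [L0, h, Set.range_comp, Submodule.span_image]
  have htop : Submodule.span ℝ (Set.range fun i : Fin n => (Pi.single i 1 : Fin n → ℝ)) = ⊤ := by
    have h2 := (Pi.basisFun ℝ (Fin n)).span_eq
    rwa [show ⇑(Pi.basisFun ℝ (Fin n)) = fun i : Fin n => (Pi.single i 1 : Fin n → ℝ) from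
      funext fun i => Pi.basisFun_apply ℝ (Fin n) i] at h2
  rw [htop, Submodule.map_top]

lemma mem_L0_iff (x : V2 n) : x ∈ L0 n ↔ ∀ j, x (Sum.inr j) = 0 := by
  rw [L0_eq_range]
  constructor
  · rintro ⟨v, rfl⟩ j; rfl
  · intro h
    exact ⟨p1 n x, by funext a; cases a with
      | inl j => rfl
      | inr j => exact (h j).symm⟩

lemma mem_range_emb2L_iff (x : V2 n) :
    x ∈ LinearMap.range (emb2L n) ↔ ∀ j, x (Sum.inl j) = 0 := by
  constructor
  · rintro ⟨v, rfl⟩ j; rfl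
  · intro h
    exact ⟨p2 n x, by funext a; cases a with
      | inl j => exact (h j).symm
      | inr j => rfl⟩

lemma perp_L0_iff (y : V2 n) :
    (∀ x ∈ L0 n, stdInner n x y = 0) ↔ ∀ j, y (Sum.inl j) = 0 := by
  constructor
  · intro h j
    have hx : (Pi.single (Sum.inl j) 1 : V2 n) ∈ L0 n :=
      Submodule.subset_span ⟨j, rfl⟩
    have := h _ hx
    rwa [stdInner_eq_dot, single_dotProduct, one_mul] at this
  · intro h x hx
    rw [stdInner_eq]
    have hr := (mem_L0_iff x).mp hx
    simp [h, hr]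

/-! #### The graph description of a Lagrangian transverse to `L0` -/

lemma exists_Bl (M : Submodule ℝ (V2 n)) (hM : IsLagrangian n M) (htrans : M ⊓ L0 n = ⊥) :
    ∃ Bl : (Fin n → ℝ) →ₗ[ℝ] (Fin n → ℝ),
      (∀ x : V2 n, x ∈ M ↔ ∃ v : Fin n → ℝ, x = Sum.elim (Bl v) v) ∧
      (∀ v w, (Bl v) ⬝ᵥ w = v ⬝ᵥ (Bl w)) := by
  classical
  set q : M →ₗ[ℝ] (Fin n → ℝ) := (p2 n) ∘ₗ M.subtype with hq
  have hinj : Function.Injective q := by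
    intro x y hxy
    have h0 : q (x - y) = 0 := by rw [map_sub, hxy, sub_self]
    have hm : (x - y : M).val ∈ L0 n := by
      rw [mem_L0_iff]
      intro j
      exact congrFun h0 j
    have h1 : (x - y : M).val ∈ M ⊓ L0 n := ⟨(x - y : M).2, hm⟩
    rw [htrans] at h1
    have h2 : (x - y : M) = 0 := Subtype.ext h1
    exact sub_eq_zero.mp h2
  have hfr : Module.finrank ℝ M = Module.finrank ℝ (Fin n → ℝ) := by
    rw [hM.1, Module.finrank_fintype_fun_eq_card, Fintype.card_fin]
  have hsurj : Function.Surjective q :=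
    (LinearMap.injective_iff_surjective_of_finrank_eq_finrank hfr).mp hinj
  set E := LinearEquiv.ofBijective q ⟨hinj, hsurj⟩ with hE
  set S : (Fin n → ℝ) →ₗ[ℝ] V2 n := M.subtype ∘ₗ (E.symm : (Fin n → ℝ) →ₗ[ℝ] M) with hS
  have hSmem : ∀ v, S v ∈ M := fun v => (E.symm v).2
  have hp2S : ∀ v, p2 n (S v) = v := by
    intro v
    have : q (E.symm v) = v := E.apply_symm_apply v
    exact this
  have hSp2 : ∀ x, x ∈ M → S (p2 n x) = x := by
    intro x hx
    have : E.symm (q ⟨x, hx⟩) = ⟨x, hx⟩ := E.symm_apply_apply _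
    exact congrArg Subtype.val this
  refine ⟨(p1 n) ∘ₗ S, ?_, ?_⟩
  · intro x
    constructor
    · intro hx
      refine ⟨p2 n x, ?_⟩
      have h1 : S (p2 n x) = x := hSp2 x hx
      funext a
      cases a with
      | inl i => exact (congrFun h1 (Sum.inl i)).symm
      | inr i => rfl
    · rintro ⟨v, rfl⟩
      have h1 : Sum.elim (((p1 n) ∘ₗ S) v) v = S v := by
        funext a
        cases a with
        | inl i => rfl
        | inr i => exact (congrFun (hp2S v) i).symm
      rw [h1]
      exact hSmem v
  · intro v w
    have hvM := hSmem v
    have hwM := hSmem w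
    have h0 := hM.2 _ hvM _ hwM
    rw [omega_eq] at h0
    have h1 : ∀ i, (S v) (Sum.inl i) = ((p1 n ∘ₗ S) v) i := fun i => rfl
    have h2 : ∀ i, (S v) (Sum.inr i) = v i := fun i => congrFun (hp2S v) i
    have h3 : ∀ i, (S w) (Sum.inl i) = ((p1 n ∘ₗ S) w) i := fun i => rfl
    have h4 : ∀ i, (S w) (Sum.inr i) = w i := fun i => congrFun (hp2S w) i
    simp only [dotProduct]
    simp only [h1, h2, h3, h4] at h0
    linarith [h0]

/-! #### Spectral theory -/

lemma exists_eigen (Bl : (Fin n → ℝ) →ₗ[ℝ] (Fin n → ℝ))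
    (hsym : ∀ v w, (Bl v) ⬝ᵥ w = v ⬝ᵥ (Bl w)) :
    ∃ (u : Fin n → (Fin n → ℝ)) (lam : Fin n → ℝ),
      (∀ i j, u i ⬝ᵥ u j = if i = j then 1 else 0) ∧ (∀ i, Bl (u i) = lam i • u i) := by
  classical
  set A := LinearMap.toMatrix' Bl with hA'
  have hmul : ∀ v, A *ᵥ v = Bl v := by
    intro v
    rw [← Matrix.toLin'_apply, hA', Matrix.toLin'_toMatrix']
  have hAij : ∀ i j, A i j = (Pi.single i 1) ⬝ᵥ Bl (Pi.single j 1) := by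
    intro i j
    rw [single_dotProduct, one_mul, hA', LinearMap.toMatrix'_apply]
  have hA : A.IsHermitian := by
    rw [Matrix.IsHermitian]
    ext i j
    simp only [Matrix.conjTranspose_apply, star_trivial]
    rw [hAij, hAij, ← hsym, dotProduct_comm]
  refine ⟨fun i => ⇑(hA.eigenvectorBasis i), fun i => hA.eigenvalues i, ?_, ?_⟩
  · intro i j
    have h2 := orthonormal_iff_ite.mp hA.eigenvectorBasis.orthonormal i j
    rw [PiLp.inner_apply] at h2
    simpa [RCLike.inner_apply, starRingEnd_apply, dotProduct, mul_comm] using h2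
  · intro i
    have h2 := hA.mulVec_eigenvectorBasis i
    rw [hmul] at h2
    exact h2

lemma eigen_count_one (Bl : (Fin n → ℝ) →ₗ[ℝ] (Fin n → ℝ))
    (hsym : ∀ v w, (Bl v) ⬝ᵥ w = v ⬝ᵥ (Bl w))
    (u : Fin n → (Fin n → ℝ)) (hu : ∀ i j, u i ⬝ᵥ u j = if i = j then 1 else 0)
    (a : Fin n → ℝ) (hua : ∀ i, Bl (u i) = a i • u i) (μ : ℝ) :
    (Finset.univ.filter fun i => a i = μ).card
      = Module.finrank ℝ (LinearMap.ker (Bl - μ • LinearMap.id) : Submodule ℝ (Fin n → ℝ)) := by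
  classical
  set E := LinearMap.ker (Bl - μ • (LinearMap.id : (Fin n → ℝ) →ₗ[ℝ] (Fin n → ℝ))) with hE
  have hmem : ∀ x, x ∈ E ↔ Bl x = μ • x := by
    intro x
    rw [hE, LinearMap.mem_ker, LinearMap.sub_apply, LinearMap.smul_apply, LinearMap.id_apply,
      sub_eq_zero]
  have hEeq : E = Submodule.span ℝ (Set.range fun i : {i : Fin n // a i = μ} => u i) := by
    apply le_antisymm
    · intro x hx
      rw [hmem] at hx
      have hex := dot_expansion u hu rfl x
      have hzero : ∀ i, a i ≠ μ → x ⬝ᵥ u i = 0 := by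
        intro i hi
        have h1 : Bl x ⬝ᵥ u i = x ⬝ᵥ Bl (u i) := hsym x (u i)
        rw [hx, hua, smul_dotProduct, dotProduct_smul] at h1
        have h2 : (μ - a i) * (x ⬝ᵥ u i) = 0 := by
          simp only [smul_eq_mul] at h1; ring_nf; linarith [h1]
        rcases mul_eq_zero.mp h2 with h | h
        · exact absurd (by linarith : μ = a i) (Ne.symm hi)
        · exact h
      rw [hex]
      rw [← Finset.sum_filter_of_ne (p := fun i => a i = μ)
        (by intro i _ hne; by_contra hcon; exact hne (by rw [hzero i hcon, zero_smul]))]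
      apply Submodule.sum_mem
      intro i hi
      have hi' : a i = μ := (Finset.mem_filter.mp hi).2
      exact Submodule.smul_mem _ _ (Submodule.subset_span ⟨⟨i, hi'⟩, rfl⟩)
    · rw [Submodule.span_le]
      rintro x ⟨⟨i, hi⟩, rfl⟩
      rw [SetLike.mem_coe, hmem, hua, hi]
  have hli : LinearIndependent ℝ (fun i : {i : Fin n // a i = μ} => u i) :=
    (dot_linearIndependent u hu).comp _ Subtype.val_injective
  rw [hEeq, finrank_span_eq_card hli, Fintype.card_subtype]

/-! #### Extracting the eigen-data from an adapted basis package -/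

lemma package_eigen (M : Submodule ℝ (V2 n)) (Bl : (Fin n → ℝ) →ₗ[ℝ] (Fin n → ℝ))
    (hmem : ∀ x : V2 n, x ∈ M ↔ ∃ v : Fin n → ℝ, x = Sum.elim (Bl v) v)
    (φ : Fin n → ℝ) (hpos : ∀ i, 0 < φ i) (hlt : ∀ i, φ i < Real.pi)
    (e f : Fin n → V2 n)
    (hsymb : IsSymplecticBasis n e f)
    (horth : ∀ a b : Fin n ⊕ Fin n,
      stdInner n (Sum.elim e f a) (Sum.elim e f b) = if a = b then 1 else 0)
    (hspanE : Submodule.span ℝ (Set.range e) = L0 n)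
    (hf : ∀ y : V2 n, y ∈ Submodule.span ℝ (Set.range f) ↔
      ∀ x ∈ L0 n, stdInner n x y = 0)
    (hMeq : M = Submodule.span ℝ (Set.range fun i : Fin n =>
      Real.cos (φ i) • e i + Real.sin (φ i) • f i)) :
    ∃ u : Fin n → (Fin n → ℝ),
      (∀ i j, u i ⬝ᵥ u j = if i = j then 1 else 0) ∧
      (∀ i, Bl (u i) = (Real.cos (φ i) / Real.sin (φ i)) • u i) := by
  classical
  set u : Fin n → (Fin n → ℝ) := fun i k => e i (Sum.inl k) with hu'
  set w : Fin n → (Fin n → ℝ) := fun i k => f i (Sum.inr k) with hw'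
  -- e i is supported on inl, f i on inr
  have heL0 : ∀ i, e i ∈ L0 n := fun i => hspanE ▸ Submodule.subset_span ⟨i, rfl⟩
  have he0 : ∀ i j, e i (Sum.inr j) = 0 := fun i => (mem_L0_iff (e i)).mp (heL0 i)
  have hfperp : ∀ i, ∀ x ∈ L0 n, stdInner n x (f i) = 0 :=
    fun i => (hf (f i)).mp (Submodule.subset_span ⟨i, rfl⟩)
  have hf0 : ∀ i j, f i (Sum.inl j) = 0 := by
    intro i j
    exact (perp_L0_iff (f i)).mp (hfperp i) j
  have he_elim : ∀ i, e i = Sum.elim (u i) 0 := by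
    intro i; funext a
    cases a with
    | inl k => rfl
    | inr k => exact he0 i k
  have hf_elim : ∀ i, f i = Sum.elim (0 : Fin n → ℝ) (w i) := by
    intro i; funext a
    cases a with
    | inl k => exact hf0 i k
    | inr k => rfl
  -- orthonormality of u and w
  have huON : ∀ i j, u i ⬝ᵥ u j = if i = j then 1 else 0 := by
    intro i j
    have h1 := horth (Sum.inl i) (Sum.inl j)
    rw [Sum.elim_inl, Sum.elim_inl, he_elim i, he_elim j, stdInner_elim] at h1
    simpa using h1
  have hwON : ∀ i j, w i ⬝ᵥ w j = if i = j then 1 else 0 := by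
    intro i j
    have h1 := horth (Sum.inr i) (Sum.inr j)
    rw [Sum.elim_inr, Sum.elim_inr, hf_elim i, hf_elim j, stdInner_elim] at h1
    simpa using h1
  -- ω(e i, f j) = δ gives u i ⬝ᵥ w j = δ
  have huw : ∀ i j, u i ⬝ᵥ w j = if i = j then 1 else 0 := by
    intro i j
    have h1 := hsymb.2.2.1 i j
    rw [he_elim i, hf_elim j, omega_elim] at h1
    simpa using h1
  -- w = u
  have hwu : w = u := by
    funext j
    have h1 := dot_expansion u huON rfl (w j)
    have h2 : ∀ i, w j ⬝ᵥ u i = if i = j then 1 else 0 := by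
      intro i
      rw [dotProduct_comm, huw]
    simp only [h2] at h1
    simp only [ite_smul, one_smul, zero_smul] at h1
    rw [Finset.sum_ite_eq' Finset.univ j u] at h1
    simpa using h1
  -- the generators of M
  have hsin : ∀ i, Real.sin (φ i) ≠ 0 :=
    fun i => (Real.sin_pos_of_pos_of_lt_pi (hpos i) (hlt i)).ne'
  have hgen : ∀ i, Bl (Real.sin (φ i) • u i) = Real.cos (φ i) • u i := by
    intro i
    have hgi : (Real.cos (φ i) • e i + Real.sin (φ i) • f i) ∈ M := by
      rw [hMeq]; exact Submodule.subset_span ⟨i, rfl⟩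
    obtain ⟨v, hv⟩ := (hmem _).mp hgi
    have hgielim : Real.cos (φ i) • e i + Real.sin (φ i) • f i
        = Sum.elim (Real.cos (φ i) • u i) (Real.sin (φ i) • u i) := by
      rw [he_elim i, hf_elim i, smul_elim, smul_elim, add_elim, ← hwu]
      simp
    rw [hgielim] at hv
    have hv2 : v = Real.sin (φ i) • u i := by
      funext k
      exact (congrFun hv (Sum.inr k)).symm
    have hv1 : Bl v = Real.cos (φ i) • u i := by
      funext k
      exact (congrFun hv (Sum.inl k)).symm
    rw [← hv2, hv1]
  refine ⟨u, huON, fun i => ?_⟩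
  have h1 := hgen i
  rw [_root_.map_smul] at h1
  have h2 := congrArg (fun z => (Real.sin (φ i))⁻¹ • z) h1
  simp only [smul_smul, inv_mul_cancel₀ (hsin i), one_smul] at h2
  rw [h2, div_eq_mul_inv, mul_comm]

end LagAux

open LagAux

/-- For every Lagrangian `M` transverse to `L_0` there is a unique nondecreasing tuple
`0 < φ_1 ≤ … ≤ φ_n < π` of angles realized by an orthonormal symplectic basis adapted to
`L_0`, `L_0^⊥` and `M`. -/
theorem lagrangian_angles (n : ℕ) (M : Submodule ℝ (V2 n))
    (hM : IsLagrangian n M) (htrans : M ⊓ L0 n = ⊥) :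
    ∃! φ : Fin n → ℝ,
      (∀ i, 0 < φ i) ∧ Monotone φ ∧ (∀ i, φ i < Real.pi) ∧
      ∃ e f : Fin n → V2 n,
        IsSymplecticBasis n e f ∧
        (∀ a b : Fin n ⊕ Fin n,
          stdInner n (Sum.elim e f a) (Sum.elim e f b) = if a = b then 1 else 0) ∧
        Submodule.span ℝ (Set.range e) = L0 n ∧
        (∀ y : V2 n, y ∈ Submodule.span ℝ (Set.range f) ↔
          ∀ x ∈ L0 n, stdInner n x y = 0) ∧
        M = Submodule.span ℝ (Set.range fun i : Fin n =>
          Real.cos (φ i) • e i + Real.sin (φ i) • f i) := by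
  classical
  obtain ⟨Bl, hmem, hsym⟩ := exists_Bl M hM htrans
  obtain ⟨u0, lam0, hu0, hl0⟩ := exists_eigen Bl hsym
  -- sort the angles
  set σ : Equiv.Perm (Fin n) := Tuple.sort (fun i => ang (lam0 i)) with hσ
  set u : Fin n → (Fin n → ℝ) := u0 ∘ σ with hu'
  set lam : Fin n → ℝ := lam0 ∘ σ with hlam'
  set φ : Fin n → ℝ := fun i => ang (lam i) with hφ'
  have hu : ∀ i j, u i ⬝ᵥ u j = if i = j then 1 else 0 := by
    intro i j
    rw [hu', Function.comp_apply, Function.comp_apply, hu0]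
    simp [σ.injective.eq_iff]
  have hl : ∀ i, Bl (u i) = lam i • u i := fun i => hl0 (σ i)
  have hmono : Monotone φ := Tuple.monotone_sort (fun i => ang (lam0 i))
  -- the basis
  set e : Fin n → V2 n := fun i => Sum.elim (u i) 0 with he'
  set f : Fin n → V2 n := fun i => Sum.elim (0 : Fin n → ℝ) (u i) with hf'
  have horth : ∀ a b : Fin n ⊕ Fin n,
      stdInner n (Sum.elim e f a) (Sum.elim e f b) = if a = b then 1 else 0 := by
    intro a b
    cases a with
    | inl i => cases b with
      | inl j => rw [Sum.elim_inl, Sum.elim_inl, he', stdInner_elim]; simp [hu]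
      | inr j => rw [Sum.elim_inl, Sum.elim_inr, he', hf', stdInner_elim]; simp
    | inr i => cases b with
      | inl j => rw [Sum.elim_inr, Sum.elim_inl, he', hf', stdInner_elim]; simp
      | inr j => rw [Sum.elim_inr, Sum.elim_inr, hf', stdInner_elim]; simp [hu]
  have hdotV : ∀ a b : Fin n ⊕ Fin n,
      (Sum.elim e f a) ⬝ᵥ (Sum.elim e f b) = if a = b then 1 else 0 := by
    intro a b; rw [← stdInner_eq_dot]; exact horth a b
  have hsymb : IsSymplecticBasis n e f := by
    refine ⟨?_, ?_, ?_, ?_, ?_⟩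
    · intro i j; rw [he', omega_elim]; simp
    · intro i j; rw [hf', omega_elim]; simp
    · intro i j; rw [he', hf', omega_elim]; simp [hu]
    · exact dot_linearIndependent _ hdotV
    · exact dot_span_top _ hdotV rfl
  have hspan_u : Submodule.span ℝ (Set.range u) = ⊤ := dot_span_top u hu rfl
  have hspanE : Submodule.span ℝ (Set.range e) = L0 n := by
    have h1 : e = ⇑(emb1L n) ∘ u := rfl
    rw [h1, Set.range_comp, Submodule.span_image, hspan_u, Submodule.map_top, L0_eq_range]
  have hspanF : Submodule.span ℝ (Set.range f) = LinearMap.range (emb2L n) := by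
    have h1 : f = ⇑(emb2L n) ∘ u := rfl
    rw [h1, Set.range_comp, Submodule.span_image, hspan_u, Submodule.map_top]
  have hfcond : ∀ y : V2 n, y ∈ Submodule.span ℝ (Set.range f) ↔
      ∀ x ∈ L0 n, stdInner n x y = 0 := by
    intro y
    rw [hspanF, mem_range_emb2L_iff, perp_L0_iff]
  -- M as the span
  have hMeq : M = Submodule.span ℝ (Set.range fun i : Fin n =>
      Real.cos (φ i) • e i + Real.sin (φ i) • f i) := by
    set Tl : (Fin n → ℝ) →ₗ[ℝ] V2 n := (emb1L n) ∘ₗ Bl + emb2L n with hTl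
    have hTlapp : ∀ v, Tl v = Sum.elim (Bl v) v := by
      intro v; funext a
      cases a with
      | inl k => simp [hTl, emb1L_apply, emb2L_apply]
      | inr k => simp [hTl, emb1L_apply, emb2L_apply]
    have hMrange : M = LinearMap.range Tl := by
      ext x
      rw [hmem, LinearMap.mem_range]
      constructor
      · rintro ⟨v, rfl⟩; exact ⟨v, hTlapp v⟩
      · rintro ⟨v, rfl⟩; exact ⟨v, hTlapp v⟩
    have hgen_eq : (fun i : Fin n => Real.cos (φ i) • e i + Real.sin (φ i) • f i)
        = fun i => Real.sin (φ i) • Tl (u i) := by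
      funext i
      rw [hTlapp, hl, he', hf']
      funext a
      have hca : Real.cos (φ i) = lam i * Real.sin (φ i) := by
        rw [hφ']; exact cos_ang_eq (lam i)
      cases a with
      | inl k =>
        simp [hca]
        ring
      | inr k =>
        simp
    rw [hMrange, hgen_eq]
    rw [span_range_smul _ _ (fun i => (Real.sin_pos_of_pos_of_lt_pi (ang_pos (lam i))
      (ang_lt_pi (lam i))).ne')]
    have h2 : (fun i => Tl (u i)) = ⇑Tl ∘ u := rfl
    rw [h2, Set.range_comp, Submodule.span_image, hspan_u, Submodule.map_top]
  refine ⟨φ, ⟨fun i => ang_pos (lam i), hmono, fun i => ang_lt_pi (lam i),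
    e, f, hsymb, horth, hspanE, hfcond, hMeq⟩, ?_⟩
  -- uniqueness
  rintro ψ ⟨hψpos, hψmono, hψlt, e', f', hsymb', horth', hspanE', hfcond', hMeq'⟩
  obtain ⟨v', hv'ON, hv'eig⟩ := package_eigen M Bl hmem ψ hψpos hψlt e' f' hsymb' horth'
    hspanE' hfcond' hMeq'
  obtain ⟨v, hvON, hveig⟩ := package_eigen M Bl hmem φ (fun i => ang_pos (lam i))
    (fun i => ang_lt_pi (lam i)) e f hsymb horth hspanE hfcond hMeq
  apply monotone_tuple_eq ψ φ hψmono hmono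
  intro θ
  by_cases hθ : 0 < θ ∧ θ < Real.pi
  · obtain ⟨hθ1, hθ2⟩ := hθ
    set μ := Real.cos θ / Real.sin θ with hμ
    have hfilt : ∀ (χ : Fin n → ℝ), (∀ i, 0 < χ i) → (∀ i, χ i < Real.pi) →
        (Finset.univ.filter fun i => χ i = θ)
          = (Finset.univ.filter fun i => Real.cos (χ i) / Real.sin (χ i) = μ) := by
      intro χ hp hl'
      apply Finset.filter_congr
      intro i _
      constructor
      · intro h; rw [h]
      · intro h
        have := congrArg ang h
        rwa [ang_cot (hp i) (hl' i), hμ, ang_cot hθ1 hθ2] at this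
    rw [hfilt ψ hψpos hψlt, hfilt φ (fun i => ang_pos (lam i)) (fun i => ang_lt_pi (lam i)),
      eigen_count_one Bl hsym v' hv'ON _ hv'eig μ,
      eigen_count_one Bl hsym v hvON _ hveig μ]
  · have hempty : ∀ (χ : Fin n → ℝ), (∀ i, 0 < χ i) → (∀ i, χ i < Real.pi) →
        (Finset.univ.filter fun i => χ i = θ) = ∅ := by
      intro χ hp hl'
      apply Finset.filter_eq_empty_iff.mpr
      intro i _
      intro h
      exact hθ ⟨h ▸ hp i, h ▸ hl' i⟩
    rw [hempty ψ hψpos hψlt, hempty φ (fun i => ang_pos (lam i)) (fun i => ang_lt_pi (lam i))]
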